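/- For each positive integer k there exists a k-generational set in ℤ²: a finite set A ⊆ ℤ² such that |cA + cA| > |cA − cA| for all integers 1 ≤ c ≤ k. -/

import Mathlib

open Pointwise

/-- The `n`-fold iterated sumset: `iterSum 0 A = {0}`, `iterSum (n+1) A = A + iterSum n A`. -/
def iterSum {G : Type*} [AddCommGroup G] [DecidableEq G] : ℕ → Finset G → Finset G
  | 0, _ => {0}
  | n + 1, A => A + iterSum n A

section Basic
variable {G : Type*} [AddCommGroup G] [DecidableEq G] (A : Finset G)

lemma iterSum_zero : iterSum 0 A = {0} := rfl
lemma iterSum_succ (m : ℕ) : iterSum (m+1) A = A + iterSum m A := rfl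

lemma zero_finset : (0 : Finset G) = {0} := rfl

lemma iterSum_one : iterSum 1 A = A := by
  show A + {0} = A
  rw [← zero_finset, add_zero]

lemma iterSum_add (a b : ℕ) : iterSum (a+b) A = iterSum a A + iterSum b A := by
  induction a with
  | zero => simp [iterSum_zero, ← zero_finset, zero_add]
  | succ a ih =>
      have : a + 1 + b = (a + b) + 1 := by omega
      rw [this, iterSum_succ, ih, iterSum_succ, add_assoc]

lemma zero_mem_iterSum (h : (0:G) ∈ A) (m : ℕ) : (0:G) ∈ iterSum m A := by
  induction m with
  | zero => simp [iterSum_zero]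
  | succ m ih =>
      rw [iterSum_succ]
      simpa using Finset.add_mem_add h ih

lemma mem_iterSum_mono {m : ℕ} (h : (0:G) ∈ A) {x : G} (hx : x ∈ iterSum m A) :
    x ∈ iterSum (m+1) A := by
  rw [iterSum_succ]
  simpa using Finset.add_mem_add h hx

end Basic

section IccInt

lemma Icc_add_Icc' {a b c d : ℤ} (h1 : a ≤ b) (h2 : c ≤ d) :
    Finset.Icc a b + Finset.Icc c d = Finset.Icc (a+c) (b+d) := by
  apply le_antisymm (Finset.Icc_add_Icc_subset a b c d)
  intro x hx
  simp only [Finset.mem_Icc] at hx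
  rw [Finset.mem_add]
  exact ⟨min b (x - c), by simp [Finset.mem_Icc]; omega, x - min b (x - c),
    by simp [Finset.mem_Icc]; omega, by omega⟩

lemma iterSum_subset_Icc {u : ℤ} {X : Finset ℤ} (h : X ⊆ Finset.Icc 0 u) (m : ℕ) :
    iterSum m X ⊆ Finset.Icc 0 ((m:ℤ)*u) := by
  induction m with
  | zero => simp [iterSum_zero]
  | succ m ih =>
      rw [iterSum_succ]
      calc X + iterSum m X ⊆ Finset.Icc 0 u + Finset.Icc 0 ((m:ℤ)*u) :=
            Finset.add_subset_add h ih
        _ ⊆ Finset.Icc (0+0) (u + (m:ℤ)*u) := Finset.Icc_add_Icc_subset _ _ _ _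
        _ = Finset.Icc 0 (((m+1:ℕ):ℤ)*u) := by push_cast; ring_nf

section OneD
variable {K W n : ℤ}

def Tst (K : ℤ) : Finset ℤ := {0, K, K+1}
noncomputable def Lst (K W n : ℤ) : Finset ℤ := Tst K ∪ Finset.Icc W n
noncomputable def Rst (W n : ℤ) : Finset ℤ := insert n (Finset.Icc 0 (n - W))

lemma cast_mul_ge {c : ℕ} (hc : 1 ≤ c) (hn : 0 ≤ n) : n ≤ (c:ℤ)*n := by
  have : (1:ℤ) ≤ (c:ℤ) := by exact_mod_cast hc
  nlinarith

lemma iterR (hW : 1 ≤ W) (hn : n = 3*W) :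
    ∀ c : ℕ, 1 ≤ c → iterSum c (Rst W n) = insert ((c:ℤ)*n) (Finset.Icc 0 ((c:ℤ)*n - W)) := by
  intro c hc
  induction c with
  | zero => omega
  | succ c ih =>
    rcases Nat.eq_or_lt_of_le hc with h1 | h1
    · rw [← h1]
      rw [iterSum_one]
      simp [Rst]
    · have hc1 : 1 ≤ c := by omega
      have hcn : n ≤ (c:ℤ)*n := cast_mul_ge hc1 (by omega)
      have hsucc : ((c+1:ℕ):ℤ)*n = (c:ℤ)*n + n := by push_cast; ring
      obtain ⟨p, hp_eq, hp⟩ : ∃ p:ℤ, (c:ℤ)*n = p ∧ n ≤ p := ⟨_, rfl, hcn⟩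
      rw [iterSum_succ, ih hc1, hsucc, hp_eq]
      ext x
      rw [Finset.mem_add]
      simp only [Rst, Finset.mem_insert, Finset.mem_Icc]
      constructor
      · rintro ⟨y, hy, z, hz, rfl⟩
        omega
      · intro hx
        by_cases hx1 : x = p + n
        · exact ⟨n, by omega, p, by omega, by omega⟩
        · by_cases hx2 : x ≤ p - W
          · exact ⟨0, by omega, x, by omega, by omega⟩
          · by_cases hx3 : x - n ≥ 0
            · exact ⟨n, by omega, x - n, by omega, by omega⟩
            · exact ⟨x - (p-W), by omega, p - W, by omega, by omega⟩

lemma iterL (hW : 1 ≤ W) (hn : n = 3*W) (hK : 1 ≤ K) (hKW : K + 1 ≤ W) :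
    ∀ c : ℕ, 1 ≤ c → iterSum c (Lst K W n) = iterSum c (Tst K) ∪ Finset.Icc W ((c:ℤ)*n) := by
  intro c hc
  induction c with
  | zero => omega
  | succ c ih =>
    rcases Nat.eq_or_lt_of_le hc with h1 | h1
    · rw [← h1, iterSum_one, iterSum_one]
      simp [Lst]
    · have hc1 : 1 ≤ c := by omega
      have hcn : n ≤ (c:ℤ)*n := cast_mul_ge hc1 (by omega)
      have hcK : (c:ℤ)*(K+1) ≤ (c:ℤ)*n := by
        apply mul_le_mul_of_nonneg_left (by omega) (by positivity)
      have hsucc : ((c+1:ℕ):ℤ)*n = (c:ℤ)*n + n := by push_cast; ring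
      have hTsub : iterSum c (Tst K) ⊆ Finset.Icc 0 ((c:ℤ)*(K+1)) := by
        apply iterSum_subset_Icc
        intro y hy
        simp only [Tst, Finset.mem_insert, Finset.mem_singleton] at hy
        simp only [Finset.mem_Icc]
        omega
      have h0T : (0:ℤ) ∈ Tst K := by simp [Tst]
      have h0iT : (0:ℤ) ∈ iterSum c (Tst K) := zero_mem_iterSum _ h0T c
      rw [iterSum_succ, ih hc1, hsucc]
      rw [show iterSum (c+1) (Tst K) = Tst K + iterSum c (Tst K) from rfl]
      ext x
      rw [Finset.mem_add, Finset.mem_union]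
      constructor
      · rintro ⟨y, hy, z, hz, rfl⟩
        simp only [Lst, Finset.mem_union, Finset.mem_Icc] at hy
        rw [Finset.mem_union, Finset.mem_Icc] at hz
        rcases hy with hy | hy
        · rcases hz with hz | hz
          · exact Or.inl (by rw [Finset.mem_add]; exact ⟨y, hy, z, hz, rfl⟩)
          · -- y ∈ T, z ∈ Icc W cn
            apply Or.inr
            rw [Finset.mem_Icc]
            simp only [Tst, Finset.mem_insert, Finset.mem_singleton] at hy
            omega
        · rcases hz with hz | hz
          · have hzb := hTsub hz
            rw [Finset.mem_Icc] at hzb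
            exact Or.inr (by rw [Finset.mem_Icc]; omega)
          · exact Or.inr (by rw [Finset.mem_Icc]; omega)
      · intro hx
        rcases hx with hx | hx
        · rw [Finset.mem_add] at hx
          obtain ⟨y, hy, z, hz, rfl⟩ := hx
          exact ⟨y, by simp [Lst]; exact Or.inl (by simpa [Tst] using hy), z,
            by rw [Finset.mem_union]; exact Or.inl hz, rfl⟩
        · rw [Finset.mem_Icc] at hx
          by_cases hx1 : x ≤ (c:ℤ)*n
          · refine ⟨0, by simp [Lst, Tst], x, ?_, (zero_add x)⟩
            rw [Finset.mem_union, Finset.mem_Icc]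
            omega
          · refine ⟨x - min (x-W) ((c:ℤ)*n), ?_, min (x-W) ((c:ℤ)*n), ?_, by ring⟩
            · simp only [Lst, Finset.mem_union, Finset.mem_Icc]
              apply Or.inr
              omega
            · rw [Finset.mem_union, Finset.mem_Icc]
              apply Or.inr
              constructor <;> omega

noncomputable def Bex (K : ℤ) (m : ℕ) : Finset ℤ :=
  insert 0 ((Finset.range m).biUnion fun i => Finset.Icc (((i:ℤ)+1)*K) (((i:ℤ)+1)*K + ((i:ℤ)+1)))

lemma mem_Bex_iff {m : ℕ} {x : ℤ} : x ∈ Bex K m ↔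
    x = 0 ∨ ∃ i : ℕ, i < m ∧ ((i:ℤ)+1)*K ≤ x ∧ x ≤ ((i:ℤ)+1)*K + ((i:ℤ)+1) := by
  simp [Bex]

lemma Bsub (hK : 1 ≤ K) : ∀ m, iterSum m (Tst K) ⊆ Bex K m := by
  intro m
  induction m with
  | zero =>
    intro x hx
    rw [iterSum_zero] at hx
    simp only [Finset.mem_singleton] at hx
    rw [mem_Bex_iff]
    exact Or.inl hx
  | succ m ih =>
    intro x hx
    rw [iterSum_succ, Finset.mem_add] at hx
    obtain ⟨y, hy, z, hz, rfl⟩ := hx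
    have hz' := ih hz
    rw [mem_Bex_iff] at hz'
    simp only [Tst, Finset.mem_insert, Finset.mem_singleton] at hy
    rw [mem_Bex_iff]
    rcases hz' with rfl | ⟨i, hi, hb1, hb2⟩
    · rcases hy with rfl | h | rfl
      · exact Or.inl (by ring)
      · refine Or.inr ⟨0, by omega, ?_, ?_⟩ <;> (push_cast; linarith)
      · refine Or.inr ⟨0, by omega, ?_, ?_⟩ <;> (push_cast; linarith)
    · rcases hy with rfl | h | rfl
      · exact Or.inr ⟨i, by omega, by linarith, by linarith⟩
      · refine Or.inr ⟨i+1, by omega, ?_, ?_⟩ <;>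
          (push_cast
           have hexp : ((i:ℤ)+1+1)*K = ((i:ℤ)+1)*K + K := by ring
           rw [hexp]; linarith)
      · refine Or.inr ⟨i+1, by omega, ?_, ?_⟩ <;>
          (push_cast
           have hexp : ((i:ℤ)+1+1)*K = ((i:ℤ)+1)*K + K := by ring
           rw [hexp]; linarith)

lemma Bsup (hK : 1 ≤ K) : ∀ m, Bex K m ⊆ iterSum m (Tst K) := by
  intro m
  induction m with
  | zero =>
    intro x hx
    rw [mem_Bex_iff] at hx
    rw [iterSum_zero]
    simp only [Finset.mem_singleton]
    rcases hx with rfl | ⟨i, hi, _⟩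
    · rfl
    · omega
  | succ m ih =>
    intro x hx
    rw [mem_Bex_iff] at hx
    have h0T : (0:ℤ) ∈ Tst K := by simp [Tst]
    rcases hx with rfl | ⟨i, hi, hb1, hb2⟩
    · exact zero_mem_iterSum _ h0T (m+1)
    · by_cases him : i < m
      · exact mem_iterSum_mono _ h0T (ih (mem_Bex_iff.2 (Or.inr ⟨i, him, hb1, hb2⟩)))
      · have hieq : i = m := by omega
        subst hieq
        rw [iterSum_succ, Finset.mem_add]
        rcases Nat.eq_zero_or_pos i with rfl | hm1
        · have hx' : x = K ∨ x = K + 1 := by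
            push_cast at hb1 hb2
            omega
          refine ⟨x, ?_, 0, zero_mem_iterSum _ h0T _, (add_zero x)⟩
          simp only [Tst, Finset.mem_insert, Finset.mem_singleton]
          tauto
        · obtain ⟨P, hP⟩ : ∃ P, ((i:ℤ)+1)*K = P := ⟨_, rfl⟩
          have hiK : (i:ℤ)*K = P - K := by rw [← hP]; ring
          rw [hP] at hb1 hb2
          have hprev : ((i-1:ℕ):ℤ) + 1 = (i:ℤ) := by push_cast [Nat.cast_sub hm1]; ring
          by_cases hjm : x ≤ P + (i:ℤ)
          · refine ⟨K, by simp [Tst], x - K, ?_, by ring⟩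
            apply ih
            rw [mem_Bex_iff]
            refine Or.inr ⟨i-1, by omega, ?_, ?_⟩ <;> rw [hprev, hiK] <;> omega
          · refine ⟨K+1, by simp [Tst], x - (K+1), ?_, by ring⟩
            apply ih
            rw [mem_Bex_iff]
            refine Or.inr ⟨i-1, by omega, ?_, ?_⟩ <;> rw [hprev, hiK] <;> omega

lemma Bex_bound {m : ℕ} (hK : 1 ≤ K) (hmW : (m:ℤ)*(K+1) ≤ W - 1) :
    Bex K m ⊆ Finset.Icc 0 (W-1) := by
  intro x hx
  rw [mem_Bex_iff] at hx
  rw [Finset.mem_Icc]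
  rcases hx with rfl | ⟨i, hi, hb1, hb2⟩
  · have h0 : (0:ℤ) ≤ (m:ℤ)*(K+1) := by positivity
    constructor
    · exact le_refl 0
    · linarith
  · have hi' : (i:ℤ)+1 ≤ (m:ℤ) := by exact_mod_cast hi
    have h1 : 0 < ((i:ℤ)+1)*K := by positivity
    have h2 : ((i:ℤ)+1)*(K+1) ≤ (m:ℤ)*(K+1) := by
      apply mul_le_mul_of_nonneg_right hi' (by omega)
    constructor
    · linarith
    · nlinarith

lemma card_Bex {m : ℕ} (hK : 1 ≤ K) (hmK : (m:ℤ) ≤ K) :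
    (Bex K m).card = 1 + ∑ i ∈ Finset.range m, (i+2) := by
  rw [Bex]
  rw [Finset.card_insert_of_notMem, Finset.card_biUnion]
  · have hs : ∑ i ∈ Finset.range m,
        (Finset.Icc (((i:ℤ)+1)*K) (((i:ℤ)+1)*K + ((i:ℤ)+1))).card
        = ∑ i ∈ Finset.range m, (i+2) := by
      apply Finset.sum_congr rfl
      intro i hi
      rw [Int.card_Icc]
      have h : ((i:ℤ)+1)*K + ((i:ℤ)+1) + 1 - ((i:ℤ)+1)*K = (i:ℤ)+2 := by ring
      rw [h]
      omega
    rw [hs, Nat.add_comm]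
  · intro i hi j hj hij
    rw [Finset.coe_range, Set.mem_Iio] at hi hj
    rw [Function.onFun, Finset.disjoint_left]
    intro a ha ha'
    rw [Finset.mem_Icc] at ha ha'
    rcases lt_or_gt_of_ne hij with h | h
    · have h1 : ((i:ℤ)+2) ≤ ((j:ℤ)+1) := by omega
      have h2 : ((i:ℤ)+2)*K ≤ ((j:ℤ)+1)*K := mul_le_mul_of_nonneg_right h1 (by omega)
      have h3 : ((i:ℤ)+2)*K = ((i:ℤ)+1)*K + K := by ring
      have h4 : (i:ℤ)+1 < K := by
        have : (i:ℤ)+2 ≤ (m:ℤ) := by exact_mod_cast (by omega : i+2 ≤ m)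
        linarith
      linarith [ha.2, ha'.1]
    · have h1 : ((j:ℤ)+2) ≤ ((i:ℤ)+1) := by omega
      have h2 : ((j:ℤ)+2)*K ≤ ((i:ℤ)+1)*K := mul_le_mul_of_nonneg_right h1 (by omega)
      have h3 : ((j:ℤ)+2)*K = ((j:ℤ)+1)*K + K := by ring
      have h4 : (j:ℤ)+1 < K := by
        have : (j:ℤ)+2 ≤ (m:ℤ) := by exact_mod_cast (by omega : j+2 ≤ m)
        linarith
      linarith [ha'.2, ha.1]
  · simp only [Finset.mem_biUnion, Finset.mem_range, Finset.mem_Icc, not_exists]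
    intro i hi
    have h1 : 0 < ((i:ℤ)+1)*K := by positivity
    omega
end OneD

section TwoD
variable {K W n : ℤ}

noncomputable def Ast (K W n : ℤ) : Finset (ℤ×ℤ) := ({(0:ℤ)} ×ˢ Lst K W n) ∪ ({(1:ℤ)} ×ˢ Rst W n)

lemma mem_Ast {a : ℤ×ℤ} : a ∈ Ast K W n ↔
    (a.1 = 0 ∧ a.2 ∈ Lst K W n) ∨ (a.1 = 1 ∧ a.2 ∈ Rst W n) := by
  constructor
  · intro h
    rw [Ast, Finset.mem_union] at h
    rcases h with h | h
    · rw [Finset.mem_product] at h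
      exact Or.inl ⟨by simpa using h.1, h.2⟩
    · rw [Finset.mem_product] at h
      exact Or.inr ⟨by simpa using h.1, h.2⟩
  · intro h
    rw [Ast, Finset.mem_union]
    rcases h with ⟨h1, h2⟩ | ⟨h1, h2⟩
    · exact Or.inl (Finset.mem_product.2 ⟨by simp [h1], h2⟩)
    · exact Or.inr (Finset.mem_product.2 ⟨by simp [h1], h2⟩)

lemma colA : ∀ (c : ℕ) (p : ℤ×ℤ), p ∈ iterSum c (Ast K W n) ↔
    ∃ j : ℕ, j ≤ c ∧ p.1 = (j:ℤ) ∧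
      p.2 ∈ iterSum j (Rst W n) + iterSum (c-j) (Lst K W n) := by
  intro c
  induction c with
  | zero =>
    intro p
    rw [iterSum_zero]
    simp only [Finset.mem_singleton]
    constructor
    · rintro rfl
      refine ⟨0, le_refl 0, rfl, ?_⟩
      rw [iterSum_zero, iterSum_zero]
      simp [Finset.mem_add]
    · rintro ⟨j, hj, h1, h2⟩
      interval_cases j
      rw [iterSum_zero, iterSum_zero] at h2
      simp only [Finset.mem_add, Finset.mem_singleton] at h2
      obtain ⟨y, rfl, z, rfl, hz⟩ := h2
      have : p = (0, (0:ℤ)) := by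
        apply Prod.ext
        · exact h1
        · simp [← hz]
      rw [this]
      rfl
  | succ c ih =>
    intro p
    rw [iterSum_succ, Finset.mem_add]
    constructor
    · rintro ⟨a, ha, q, hq, rfl⟩
      rw [mem_Ast] at ha
      obtain ⟨j, hj, hq1, hq2⟩ := (ih q).1 hq
      rcases ha with ⟨ha1, ha2⟩ | ⟨ha1, ha2⟩
      · refine ⟨j, by omega, by simp [Prod.fst_add, ha1, hq1], ?_⟩
        have hstep : (c + 1) - j = (c - j) + 1 := by omega
        rw [hstep]
        have : iterSum ((c-j)+1) (Lst K W n) = Lst K W n + iterSum (c-j) (Lst K W n) := rfl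
        rw [this, add_left_comm]
        exact Finset.add_mem_add ha2 hq2
      · refine ⟨j+1, by omega, by simp [Prod.fst_add, ha1, hq1]; push_cast; ring, ?_⟩
        have hstep : (c + 1) - (j+1) = c - j := by omega
        rw [hstep]
        have : iterSum (j+1) (Rst W n) = Rst W n + iterSum j (Rst W n) := rfl
        rw [this, add_assoc]
        exact Finset.add_mem_add ha2 hq2
    · rintro ⟨j, hj, h1, h2⟩
      rcases Nat.eq_zero_or_pos j with rfl | hjpos
      · rw [iterSum_zero, show (c+1) - 0 = c + 1 from rfl] at h2
        rw [show iterSum (c+1) (Lst K W n) = Lst K W n + iterSum c (Lst K W n) from rfl] at h2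
        rw [show ({0} : Finset ℤ) + (Lst K W n + iterSum c (Lst K W n))
            = Lst K W n + iterSum c (Lst K W n) by rw [← zero_finset, zero_add]] at h2
        rw [Finset.mem_add] at h2
        obtain ⟨l, hl, z, hz, hlz⟩ := h2
        refine ⟨((0:ℤ), l), mem_Ast.2 (Or.inl ⟨rfl, hl⟩), ((0:ℤ), z), ?_, ?_⟩
        · apply (ih _).2
          refine ⟨0, by omega, rfl, ?_⟩
          rw [iterSum_zero, ← zero_finset, zero_add]
          exact hz
        · apply Prod.ext
          · simp [h1]
          · simpa using hlz
      · obtain ⟨j', rfl⟩ : ∃ j', j = j' + 1 := ⟨j - 1, by omega⟩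
        rw [show iterSum (j'+1) (Rst W n) = Rst W n + iterSum j' (Rst W n) from rfl,
          add_assoc, Finset.mem_add] at h2
        obtain ⟨r, hr, z, hz, hrz⟩ := h2
        refine ⟨((1:ℤ), r), mem_Ast.2 (Or.inr ⟨rfl, hr⟩), ((j':ℤ), z), ?_, ?_⟩
        · apply (ih _).2
          refine ⟨j', by omega, rfl, ?_⟩
          have : (c+1) - (j'+1) = c - j' := by omega
          rw [← this]
          exact hz
        · apply Prod.ext
          · simp [h1]; push_cast; ring
          · simpa using hrz

lemma zero_mem_Lst (hW : 1 ≤ W) (hKW : K + 1 ≤ W) (hn : n = 3*W) : (0:ℤ) ∈ Lst K W n := by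
  simp [Lst, Tst]

lemma Rst_sub (hW : 1 ≤ W) (hn : n = 3*W) : Rst W n ⊆ Finset.Icc 0 n := by
  intro x hx
  simp only [Rst, Finset.mem_insert, Finset.mem_Icc] at hx
  rw [Finset.mem_Icc]
  omega

lemma Lst_sub (hW : 1 ≤ W) (hK : 1 ≤ K) (hKW : K + 1 ≤ W) (hn : n = 3*W) :
    Lst K W n ⊆ Finset.Icc 0 n := by
  intro x hx
  simp only [Lst, Tst, Finset.mem_union, Finset.mem_insert, Finset.mem_singleton,
    Finset.mem_Icc] at hx
  rw [Finset.mem_Icc]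
  rcases hx with (rfl | rfl | rfl) | h <;> omega

lemma colfull (hW : 1 ≤ W) (hK : 1 ≤ K) (hKW : K + 1 ≤ W) (hn : n = 3*W)
    (m j : ℕ) (hj1 : 1 ≤ j) (hj2 : j + 1 ≤ m) :
    Finset.Icc (0:ℤ) ((m:ℤ)*n) ⊆ iterSum j (Rst W n) + iterSum (m-j) (Lst K W n) := by
  intro v hv
  rw [Finset.mem_Icc] at hv
  have hmj : 1 ≤ m - j := by omega
  have hpq : ((j:ℤ))*n + ((m-j:ℕ):ℤ)*n = (m:ℤ)*n := by
    push_cast [Nat.cast_sub (by omega : j ≤ m)]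
    ring
  have hp : n ≤ (j:ℤ)*n := cast_mul_ge hj1 (by omega)
  have hq : n ≤ ((m-j:ℕ):ℤ)*n := cast_mul_ge hmj (by omega)
  rw [Finset.mem_add]
  obtain ⟨p, hpd⟩ : ∃ p, (j:ℤ)*n = p := ⟨_, rfl⟩
  obtain ⟨q, hqd⟩ : ∃ q, ((m-j:ℕ):ℤ)*n = q := ⟨_, rfl⟩
  rw [hpd] at hp
  rw [hqd] at hq
  rw [hpd, hqd] at hpq
  have memR : ∀ y : ℤ, (y = p ∨ (0 ≤ y ∧ y ≤ p - W)) → y ∈ iterSum j (Rst W n) := by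
    intro y hy
    rw [iterR hW hn j hj1, hpd]
    simp only [Finset.mem_insert, Finset.mem_Icc]
    tauto
  have memL : ∀ z : ℤ, (W ≤ z ∧ z ≤ q) → z ∈ iterSum (m-j) (Lst K W n) := by
    intro z hz
    rw [iterL hW hn hK hKW (m-j) hmj, hqd]
    rw [Finset.mem_union, Finset.mem_Icc]
    exact Or.inr hz
  have memL0 : (0:ℤ) ∈ iterSum (m-j) (Lst K W n) :=
    zero_mem_iterSum _ (zero_mem_Lst hW hKW hn) _
  by_cases h1 : v ≤ p - W
  · exact ⟨v, memR v (by omega), 0, memL0, by ring⟩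
  · by_cases h2 : v ≤ p + q - W
    · refine ⟨v - max W (v - (p - W)), memR _ (by omega), max W (v - (p - W)),
        memL _ (by omega), by ring⟩
    · exact ⟨p, memR p (by omega), v - p, memL _ (by omega), by ring⟩

lemma diffPos (hW : 1 ≤ W) (hK : 1 ≤ K) (hKW : K + 1 ≤ W) (hn : n = 3*W)
    (c : ℕ) (hc : 1 ≤ c) (hcW : (c:ℤ)*(K+1) ≤ W - 1)
    {va vb : ℤ} (hva : va ∈ iterSum c (Rst W n)) (hvb : vb ∈ iterSum c (Lst K W n)) :
    va - vb ∈ Finset.Icc (-((c:ℤ)*n)) ((c:ℤ)*n - W) ∪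
      (Bex K c).image (fun b => (c:ℤ)*n - b) := by
  rw [iterR hW hn c hc] at hva
  rw [iterL hW hn hK hKW c hc] at hvb
  simp only [Finset.mem_insert, Finset.mem_Icc] at hva
  rw [Finset.mem_union] at hvb
  have hcn : n ≤ (c:ℤ)*n := cast_mul_ge hc (by omega)
  rw [Finset.mem_union, Finset.mem_Icc]
  rcases hvb with hvb | hvb
  · have hvb' := Bsub hK c hvb
    rcases hva with rfl | hva
    · exact Or.inr (Finset.mem_image.2 ⟨vb, hvb', by ring⟩)
    · have hb := Bex_bound hK hcW hvb'
      rw [Finset.mem_Icc] at hb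
      exact Or.inl (by omega)
  · rw [Finset.mem_Icc] at hvb
    rcases hva with rfl | hva
    · exact Or.inl (by omega)
    · exact Or.inl (by omega)

lemma diffNeg (hW : 1 ≤ W) (hK : 1 ≤ K) (hKW : K + 1 ≤ W) (hn : n = 3*W)
    (c : ℕ) (hc : 1 ≤ c) (hcW : (c:ℤ)*(K+1) ≤ W - 1)
    {va vb : ℤ} (hva : va ∈ iterSum c (Rst W n)) (hvb : vb ∈ iterSum c (Lst K W n)) :
    vb - va ∈ Finset.Icc (W - (c:ℤ)*n) ((c:ℤ)*n) ∪
      (Bex K c).image (fun b => b - (c:ℤ)*n) := by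
  rw [iterR hW hn c hc] at hva
  rw [iterL hW hn hK hKW c hc] at hvb
  simp only [Finset.mem_insert, Finset.mem_Icc] at hva
  rw [Finset.mem_union] at hvb
  have hcn : n ≤ (c:ℤ)*n := cast_mul_ge hc (by omega)
  rw [Finset.mem_union, Finset.mem_Icc]
  rcases hvb with hvb | hvb
  · have hvb' := Bsub hK c hvb
    rcases hva with rfl | hva
    · exact Or.inr (Finset.mem_image.2 ⟨vb, hvb', by ring⟩)
    · have hb := Bex_bound hK hcW hvb'
      rw [Finset.mem_Icc] at hb
      exact Or.inl (by omega)
  · rw [Finset.mem_Icc] at hvb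
    rcases hva with rfl | hva
    · exact Or.inl (by omega)
    · exact Or.inl (by omega)

lemma col_bound (hW : 1 ≤ W) (hK : 1 ≤ K) (hKW : K + 1 ≤ W) (hn : n = 3*W)
    (c j : ℕ) (hj : j ≤ c) {v : ℤ}
    (hv : v ∈ iterSum j (Rst W n) + iterSum (c-j) (Lst K W n)) :
    0 ≤ v ∧ v ≤ (c:ℤ)*n := by
  have h1 := iterSum_subset_Icc (Rst_sub hW hn) j
  have h2 := iterSum_subset_Icc (Lst_sub hW hK hKW hn) (c-j)
  rw [Finset.mem_add] at hv
  obtain ⟨y, hy, z, hz, rfl⟩ := hv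
  have hy' := h1 hy
  have hz' := h2 hz
  rw [Finset.mem_Icc] at hy' hz'
  have hpq : ((j:ℤ))*n + ((c-j:ℕ):ℤ)*n = (c:ℤ)*n := by
    push_cast [Nat.cast_sub hj]
    ring
  constructor <;> omega

end TwoD


lemma card_Icc_int {a b : ℤ} (h : a ≤ b + 1) : ((Finset.Icc a b).card : ℤ) = b + 1 - a := by
  rw [Int.card_Icc]
  omega

lemma sum_id (m : ℕ) : 2 * (∑ i ∈ Finset.range m, (i+2)) = m*m + 3*m := by
  induction m with
  | zero => simp
  | succ m ih =>
    rw [Finset.sum_range_succ]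
    have h : (m+1)*(m+1) + 3*(m+1) = m*m + 5*m + 4 := by ring
    rw [h]
    omega

lemma sum_lt (c : ℕ) (hc : 1 ≤ c) :
    2*(∑ i ∈ Finset.range c, (i+2)) < ∑ i ∈ Finset.range (c+c), (i+2) := by
  have s1 := sum_id c
  have s2 := sum_id (c+c)
  nlinarith [s1, s2, hc]

set_option maxHeartbeats 1000000 in
theorem stmt8 (k : ℕ) (hk : 1 ≤ k) :
    ∃ A : Finset (ℤ × ℤ), ∀ c : ℕ, 1 ≤ c → c ≤ k →
      (iterSum c A - iterSum c A).card < (iterSum c A + iterSum c A).card := by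
  have hk1 : (1:ℤ) ≤ (k:ℤ) := by exact_mod_cast hk
  set Kv : ℤ := 2*(k:ℤ)+1 with hKv
  set Wv : ℤ := 2*(k:ℤ)*(2*(k:ℤ)+2)+1 with hWv
  set nv : ℤ := 3*(2*(k:ℤ)*(2*(k:ℤ)+2)+1) with hnv
  have hK : 1 ≤ Kv := by omega
  have hW : 1 ≤ Wv := by nlinarith
  have hKW : Kv + 1 ≤ Wv := by nlinarith
  have hn : nv = 3*Wv := rfl
  refine ⟨Ast Kv Wv nv, ?_⟩
  intro c hc1 hck
  have hck' : (c:ℤ) ≤ (k:ℤ) := by exact_mod_cast hck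
  have hc1' : (1:ℤ) ≤ (c:ℤ) := by exact_mod_cast hc1
  set m : ℕ := c + c with hm
  have hm1 : 1 ≤ m := by omega
  have hcW : (c:ℤ)*(Kv+1) ≤ Wv - 1 := by nlinarith
  have hmW : ((m:ℕ):ℤ)*(Kv+1) ≤ Wv - 1 := by
    have : ((m:ℕ):ℤ) = 2*(c:ℤ) := by push_cast [hm]; ring
    rw [this]
    nlinarith
  have hcK : (c:ℤ) ≤ Kv := by omega
  have hmK : ((m:ℕ):ℤ) ≤ Kv := by
    have : ((m:ℕ):ℤ) = 2*(c:ℤ) := by push_cast [hm]; ring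
    omega
  set Nc : ℤ := (c:ℤ)*nv with hNcd
  have hNm : ((m:ℕ):ℤ)*nv = 2*Nc := by push_cast [hm]; ring
  have hnv1 : 1 ≤ nv := by omega
  have hNc : nv ≤ Nc := cast_mul_ge hc1 (by omega)
  -- the sum set
  have hS : iterSum c (Ast Kv Wv nv) + iterSum c (Ast Kv Wv nv) = iterSum m (Ast Kv Wv nv) :=
    (iterSum_add (Ast Kv Wv nv) c c).symm
  -- lower bound pieces for the sum
  set G0 : Finset (ℤ×ℤ) := {(0:ℤ)} ×ˢ (Bex Kv m ∪ Finset.Icc Wv (2*Nc)) with hG0d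
  set G1 : Finset (ℤ×ℤ) := (Finset.Icc (1:ℤ) (2*(c:ℤ)-1)) ×ˢ (Finset.Icc 0 (2*Nc)) with hG1d
  set G2 : Finset (ℤ×ℤ) := {(2*(c:ℤ))} ×ˢ (insert (2*Nc) (Finset.Icc 0 (2*Nc - Wv))) with hG2d
  have hmcast : ((m:ℕ):ℤ) = 2*(c:ℤ) := by push_cast [hm]; ring
  have hG0 : G0 ⊆ iterSum m (Ast Kv Wv nv) := by
    intro p hp
    rw [hG0d, Finset.mem_product] at hp
    apply (colA m p).2
    refine ⟨0, by omega, by simpa using hp.1, ?_⟩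
    rw [iterSum_zero, ← zero_finset, zero_add, Nat.sub_zero]
    rw [iterL hW hn hK hKW m hm1]
    rcases Finset.mem_union.1 hp.2 with h | h
    · exact Finset.mem_union_left _ (Bsup hK m h)
    · rw [Finset.mem_union]
      right
      rw [Finset.mem_Icc] at h ⊢
      rw [hNm]
      omega
  have hG1 : G1 ⊆ iterSum m (Ast Kv Wv nv) := by
    intro p hp
    rw [hG1d, Finset.mem_product] at hp
    obtain ⟨hp1, hp2⟩ := hp
    rw [Finset.mem_Icc] at hp1
    have hj1 : ((p.1.toNat : ℕ):ℤ) = p.1 := Int.toNat_of_nonneg (by omega)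
    apply (colA m p).2
    refine ⟨p.1.toNat, by omega, hj1.symm, ?_⟩
    apply colfull hW hK hKW hn m p.1.toNat (by omega) (by omega)
    rw [Finset.mem_Icc] at hp2 ⊢
    rw [hNm]
    omega
  have hG2 : G2 ⊆ iterSum m (Ast Kv Wv nv) := by
    intro p hp
    rw [hG2d, Finset.mem_product] at hp
    apply (colA m p).2
    refine ⟨m, le_refl m, by rw [hmcast]; simpa using hp.1, ?_⟩
    rw [Nat.sub_self, iterSum_zero, ← zero_finset, add_zero]
    rw [iterR hW hn m hm1]
    have hp2 := hp.2
    simp only [Finset.mem_insert, Finset.mem_Icc] at hp2 ⊢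
    rw [hNm]
    omega
  -- card computations for the sum lower bound
  have hNcW : Wv ≤ Nc := by omega
  have hBdisj : Disjoint (Bex Kv m) (Finset.Icc Wv (2*Nc)) := by
    rw [Finset.disjoint_left]
    intro x hx hx2
    have h1 := Bex_bound hK hmW hx
    rw [Finset.mem_Icc] at h1 hx2
    omega
  have hcardG0 : (G0.card : ℤ) = ((Bex Kv m).card : ℤ) + (2*Nc - Wv + 1) := by
    rw [hG0d, Finset.card_product, Finset.card_singleton, one_mul,
      Finset.card_union_of_disjoint hBdisj]
    push_cast
    rw [card_Icc_int (by omega)]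
    ring
  have hcardG1 : (G1.card : ℤ) = (2*(c:ℤ)-1) * (2*Nc+1) := by
    rw [hG1d, Finset.card_product]
    push_cast
    rw [card_Icc_int (by omega), card_Icc_int (by omega)]
    ring
  have hcardG2 : (G2.card : ℤ) = (2*Nc - Wv + 1) + 1 := by
    rw [hG2d, Finset.card_product, Finset.card_singleton, one_mul,
      Finset.card_insert_of_notMem (by rw [Finset.mem_Icc]; omega)]
    push_cast
    rw [card_Icc_int (by omega)]
    ring
  have hd01 : Disjoint G0 G1 := by
    rw [Finset.disjoint_left]
    intro p hp hp'
    rw [hG0d, Finset.mem_product] at hp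
    rw [hG1d, Finset.mem_product] at hp'
    have h1 : p.1 = 0 := by simpa using hp.1
    have h2 := hp'.1
    rw [Finset.mem_Icc] at h2
    omega
  have hd012 : Disjoint (G0 ∪ G1) G2 := by
    rw [Finset.disjoint_left]
    intro p hp hp'
    rw [hG2d, Finset.mem_product] at hp'
    have h2 : p.1 = 2*(c:ℤ) := by simpa using hp'.1
    rcases Finset.mem_union.1 hp with h | h
    · rw [hG0d, Finset.mem_product] at h
      have h1 : p.1 = 0 := by simpa using h.1
      omega
    · rw [hG1d, Finset.mem_product] at h
      have h1 := h.1
      rw [Finset.mem_Icc] at h1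
      omega
  have hSge : (2*(c:ℤ)-1)*(2*Nc+1) + 2*(2*Nc - Wv + 1) + ((Bex Kv m).card : ℤ) + 1
      ≤ ((iterSum c (Ast Kv Wv nv) + iterSum c (Ast Kv Wv nv)).card : ℤ) := by
    rw [hS]
    have hsub : G0 ∪ G1 ∪ G2 ⊆ iterSum m (Ast Kv Wv nv) :=
      Finset.union_subset (Finset.union_subset hG0 hG1) hG2
    have hle := Finset.card_le_card hsub
    have hcards : ((G0 ∪ G1 ∪ G2).card : ℤ)
        = (G0.card : ℤ) + (G1.card : ℤ) + (G2.card : ℤ) := by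
      rw [Finset.card_union_of_disjoint hd012, Finset.card_union_of_disjoint hd01]
      push_cast
      ring
    have hle' : ((G0 ∪ G1 ∪ G2).card : ℤ) ≤ ((iterSum m (Ast Kv Wv nv)).card : ℤ) := by
      exact_mod_cast hle
    rw [hcards, hcardG0, hcardG1, hcardG2] at hle'
    linarith
  -- upper bound for the difference set
  set Pcol : Finset ℤ := Finset.Icc (-Nc) (Nc - Wv) ∪ (Bex Kv c).image (fun b => Nc - b)
    with hPd
  set Qcol : Finset ℤ := Finset.Icc (Wv - Nc) Nc ∪ (Bex Kv c).image (fun b => b - Nc)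
    with hQd
  set Emid : Finset (ℤ×ℤ) := (Finset.Icc (-(c:ℤ)+1) ((c:ℤ)-1)) ×ˢ (Finset.Icc (-Nc) Nc)
    with hEmd
  set EP : Finset (ℤ×ℤ) := {(c:ℤ)} ×ˢ Pcol with hEPd
  set EQ : Finset (ℤ×ℤ) := {-(c:ℤ)} ×ˢ Qcol with hEQd
  have hDsub : iterSum c (Ast Kv Wv nv) - iterSum c (Ast Kv Wv nv) ⊆ Emid ∪ EP ∪ EQ := by
    intro x hx
    rw [Finset.mem_sub] at hx
    obtain ⟨pp, hp, qq, hq, rfl⟩ := hx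
    obtain ⟨a, ha, hp1, hp2⟩ := (colA c pp).1 hp
    obtain ⟨b, hb, hq1, hq2⟩ := (colA c qq).1 hq
    by_cases hac : a = c ∧ b = 0
    · apply Finset.mem_union_left
      apply Finset.mem_union_right
      rw [hEPd, Finset.mem_product]
      constructor
      · rw [Prod.fst_sub, hp1, hq1, hac.1, hac.2]
        simp
      · rw [hac.1, Nat.sub_self, iterSum_zero, ← zero_finset, add_zero] at hp2
        rw [hac.2, iterSum_zero, ← zero_finset, zero_add, Nat.sub_zero] at hq2
        have hdp := diffPos hW hK hKW hn c hc1 hcW hp2 hq2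
        rw [← hNcd] at hdp
        rw [Prod.snd_sub]
        exact hdp
    · by_cases hbc : a = 0 ∧ b = c
      · apply Finset.mem_union_right
        rw [hEQd, Finset.mem_product]
        constructor
        · rw [Prod.fst_sub, hp1, hq1, hbc.1, hbc.2]
          simp
        · rw [hbc.2, Nat.sub_self, iterSum_zero, ← zero_finset, add_zero] at hq2
          rw [hbc.1, iterSum_zero, ← zero_finset, zero_add, Nat.sub_zero] at hp2
          have hdp := diffNeg hW hK hKW hn c hc1 hcW hq2 hp2
          rw [← hNcd] at hdp
          rw [Prod.snd_sub]
          exact hdp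
      · apply Finset.mem_union_left
        apply Finset.mem_union_left
        rw [hEmd, Finset.mem_product]
        have hbnd1 := col_bound hW hK hKW hn c a ha hp2
        have hbnd2 := col_bound hW hK hKW hn c b hb hq2
        rw [← hNcd] at hbnd1 hbnd2
        constructor
        · rw [Prod.fst_sub, hp1, hq1, Finset.mem_Icc]
          omega
        · rw [Prod.snd_sub, Finset.mem_Icc]
          omega
  have hcardEmid : (Emid.card : ℤ) = (2*(c:ℤ)-1) * (2*Nc+1) := by
    rw [hEmd, Finset.card_product]
    push_cast
    rw [card_Icc_int (by omega), card_Icc_int (by omega)]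
    ring
  have hcardEP : (EP.card : ℤ) ≤ (2*Nc - Wv + 1) + ((Bex Kv c).card : ℤ) := by
    rw [hEPd, Finset.card_product, Finset.card_singleton, one_mul, hPd]
    have h1 := Finset.card_union_le (Finset.Icc (-Nc) (Nc - Wv))
      ((Bex Kv c).image (fun b => Nc - b))
    have h2 := Finset.card_image_le (s := Bex Kv c) (f := fun b => Nc - b)
    have h3 : ((Finset.Icc (-Nc) (Nc - Wv)).card : ℤ) = 2*Nc - Wv + 1 := by
      rw [card_Icc_int (by omega)]
      ring
    have h1' : ((Finset.Icc (-Nc) (Nc-Wv) ∪ (Bex Kv c).image (fun b => Nc - b)).card : ℤ)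
        ≤ ((Finset.Icc (-Nc) (Nc - Wv)).card : ℤ)
          + (((Bex Kv c).image (fun b => Nc - b)).card : ℤ) := by exact_mod_cast h1
    have h2' : (((Bex Kv c).image (fun b => Nc - b)).card : ℤ) ≤ ((Bex Kv c).card : ℤ) := by
      exact_mod_cast h2
    linarith
  have hcardEQ : (EQ.card : ℤ) ≤ (2*Nc - Wv + 1) + ((Bex Kv c).card : ℤ) := by
    rw [hEQd, Finset.card_product, Finset.card_singleton, one_mul, hQd]
    have h1 := Finset.card_union_le (Finset.Icc (Wv - Nc) Nc)
      ((Bex Kv c).image (fun b => b - Nc))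
    have h2 := Finset.card_image_le (s := Bex Kv c) (f := fun b => b - Nc)
    have h3 : ((Finset.Icc (Wv - Nc) Nc).card : ℤ) = 2*Nc - Wv + 1 := by
      rw [card_Icc_int (by omega)]
      ring
    have h1' : ((Finset.Icc (Wv - Nc) Nc ∪ (Bex Kv c).image (fun b => b - Nc)).card : ℤ)
        ≤ ((Finset.Icc (Wv - Nc) Nc).card : ℤ)
          + (((Bex Kv c).image (fun b => b - Nc)).card : ℤ) := by exact_mod_cast h1
    have h2' : (((Bex Kv c).image (fun b => b - Nc)).card : ℤ) ≤ ((Bex Kv c).card : ℤ) := by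
      exact_mod_cast h2
    linarith
  have hDle : ((iterSum c (Ast Kv Wv nv) - iterSum c (Ast Kv Wv nv)).card : ℤ)
      ≤ (2*(c:ℤ)-1)*(2*Nc+1) + 2*(2*Nc - Wv + 1) + 2*((Bex Kv c).card : ℤ) := by
    have hle := Finset.card_le_card hDsub
    have hu1 := Finset.card_union_le (Emid ∪ EP) EQ
    have hu2 := Finset.card_union_le Emid EP
    have hle' : ((iterSum c (Ast Kv Wv nv) - iterSum c (Ast Kv Wv nv)).card : ℤ)
        ≤ (Emid.card : ℤ) + (EP.card : ℤ) + (EQ.card : ℤ) := by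
      have : (iterSum c (Ast Kv Wv nv) - iterSum c (Ast Kv Wv nv)).card
          ≤ Emid.card + EP.card + EQ.card := by omega
      exact_mod_cast this
    rw [hcardEmid] at hle'
    linarith
  -- key counting inequality
  have hkey : 2*((Bex Kv c).card : ℤ) < ((Bex Kv m).card : ℤ) + 1 := by
    have e1 := card_Bex (K := Kv) hK hcK
    have e2 := card_Bex (K := Kv) hK hmK
    have s1 := sum_id c
    have s2 := sum_id m
    have hlt : 2*(∑ i ∈ Finset.range c, (i+2)) < ∑ i ∈ Finset.range m, (i+2) := by
      have := sum_lt c hc1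
      rw [← hm] at this
      exact this
    rw [e1, e2]
    push_cast
    push_cast at hlt
    linarith
  have final : ((iterSum c (Ast Kv Wv nv) - iterSum c (Ast Kv Wv nv)).card : ℤ)
      < ((iterSum c (Ast Kv Wv nv) + iterSum c (Ast Kv Wv nv)).card : ℤ) := by
    linarith
  exact_mod_cast final
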